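/- If a countable group Γ is the union of an increasing sequence Γ₀ ≤ Γ₁ ≤ Γ₂ ≤ ⋯ of subgroups each of which is approximately treeable, then Γ is approximately treeable. -/

import Mathlib

open MeasureTheory

namespace Stmt8


/-- The undirected graph on `Γ` underlying a set `F ⊆ Γ × Γ` of directed edges. -/
def graphOf {Γ : Type*} (F : Γ × Γ → Bool) : SimpleGraph Γ where
  Adj a b := a ≠ b ∧ (F (a, b) = true ∨ F (b, a) = true)
  symm := ⟨fun _ _ h => ⟨h.1.symm, h.2.symm⟩⟩
  loopless := ⟨fun _ h => h.1 rfl⟩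

/-- `F` is a directed forest on `Γ`: `F ∩ F̄ = ∅` and `F ∪ F̄` has no cycles. -/
def IsDirForest {Γ : Type*} (F : Γ × Γ → Bool) : Prop :=
  (∀ q : Γ × Γ, ¬(F q = true ∧ F (q.2, q.1) = true)) ∧ (graphOf F).IsAcyclic

/-- The diagonal action of `Γ` on subsets of `Γ × Γ`. -/
def dAct {Γ : Type*} [Group Γ] (γ : Γ) (F : Γ × Γ → Bool) : Γ × Γ → Bool :=
  fun q => F (γ⁻¹ * q.1, γ⁻¹ * q.2)

/-- A countable group `Γ` is approximately treeable if for every finite `H ⊆ Γ` and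
`ε > 0` there is a Borel probability measure on the space of directed forests on `Γ`,
invariant under the diagonal action, giving measure `< ε` to the set of forests `F`
with `H × H ⊄ E_F`.  (The measure is realized as an invariant Borel probability measure
on `2^(Γ × Γ)` concentrated on the set of directed forests.) -/
def ApproxTreeable (Γ : Type*) [Group Γ] : Prop :=
  ∀ (H : Finset Γ) (ε : ℝ), 0 < ε →
    ∃ μ : Measure ((Γ × Γ) → Bool), IsProbabilityMeasure μ ∧
      (∀ γ : Γ, MeasurePreserving (dAct γ) μ μ) ∧
      μ {F | IsDirForest F} = 1 ∧
      μ {F | IsDirForest F ∧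
        ¬ ∀ a ∈ H, ∀ b ∈ H, (graphOf F).Reachable a b} < ENNReal.ofReal ε

set_option linter.unusedSectionVars false
set_option maxHeartbeats 1000000

open Set ENNReal

section DAct

variable {G : Type*} [Group G]

lemma dAct_dAct (a b : G) (F : G × G → Bool) : dAct a (dAct b F) = dAct (a * b) F := by
  funext p
  simp [dAct, mul_inv_rev, mul_assoc]

lemma dAct_one (F : G × G → Bool) : dAct (1 : G) F = F := by
  funext p; simp [dAct]

end DAct

section Graphs

variable {V : Type*}

open SimpleGraph

lemma walk_support_inj {G : SimpleGraph V} :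
    ∀ {v w : V} (p q : G.Walk v w), p.support = q.support → p = q := by
  intro v w p
  induction p with
  | nil =>
    intro q h
    cases q with
    | nil => rfl
    | cons h' q' =>
      exfalso
      simp only [Walk.support_nil, Walk.support_cons] at h
      have hlen := congrArg List.length h
      simp only [List.length_cons, List.length_nil, List.length_singleton, Walk.length_support] at hlen
      omega
  | cons h' p' ih =>
    intro q hq
    cases q with
    | nil =>
      exfalso
      simp only [Walk.support_nil, Walk.support_cons] at hq
      exact Walk.support_ne_nil p' (by simpa using hq)
    | cons h2 q2 =>
      simp only [Walk.support_cons, List.cons.injEq, true_and] at hq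
      have hb : _ := congrArg List.head? hq
      rw [Walk.support_eq_cons p', Walk.support_eq_cons q2] at hb
      simp only [List.head?] at hb
      obtain rfl : _ = _ := Option.some.inj hb
      rw [ih q2 hq]

instance walkCountable [Countable V] (G : SimpleGraph V) (v w : V) :
    Countable (G.Walk v w) :=
  Function.Injective.countable (f := fun p : G.Walk v w => p.support)
    (fun p q h => walk_support_inj p q h)

lemma measurableSet_mem_edgeSet (e : Sym2 V) :
    MeasurableSet {F : V × V → Bool | e ∈ (graphOf F).edgeSet} := by
  refine Sym2.ind (f := fun e => MeasurableSet {F : V × V → Bool | e ∈ (graphOf F).edgeSet}) ?_ e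
  intro a b
  by_cases hab : a = b
  · subst hab
    convert MeasurableSet.empty
    ext F
    simp [SimpleGraph.mem_edgeSet, graphOf]
  · have : {F : V × V → Bool | s(a, b) ∈ (graphOf F).edgeSet} =
        ((fun F : V × V → Bool => F (a, b)) ⁻¹' {true}) ∪
        ((fun F : V × V → Bool => F (b, a)) ⁻¹' {true}) := by
      ext F
      simp [SimpleGraph.mem_edgeSet, graphOf, hab]
    rw [this]
    exact ((measurable_pi_apply _) (measurableSet_singleton _)).union
      ((measurable_pi_apply _) (measurableSet_singleton _))

lemma measurableSet_edgesEvent (l : List (Sym2 V)) :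
    MeasurableSet {F : V × V → Bool | ∀ e ∈ l, e ∈ (graphOf F).edgeSet} := by
  have : {F : V × V → Bool | ∀ e ∈ l, e ∈ (graphOf F).edgeSet} =
      ⋂ e ∈ {e : Sym2 V | e ∈ l}, {F : V × V → Bool | e ∈ (graphOf F).edgeSet} := by
    ext F; simp
  rw [this]
  exact MeasurableSet.biInter (l.finite_toSet.countable)
    (fun e _ => measurableSet_mem_edgeSet e)

lemma not_isAcyclic_iff (F : V × V → Bool) :
    ¬ (graphOf F).IsAcyclic ↔ ∃ (v : V) (c : (⊤ : SimpleGraph V).Walk v v),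
      c.IsCycle ∧ ∀ e ∈ c.edges, e ∈ (graphOf F).edgeSet := by
  constructor
  · intro h
    simp only [SimpleGraph.IsAcyclic, not_forall, not_not] at h
    obtain ⟨v, c, hc⟩ := h
    have hce : ∀ e ∈ c.edges, e ∈ (⊤ : SimpleGraph V).edgeSet := by
      intro e he
      rw [SimpleGraph.edgeSet_top]
      exact SimpleGraph.not_isDiag_of_mem_edgeSet _ (c.edges_subset_edgeSet he)
    refine ⟨v, c.transfer ⊤ hce, hc.transfer hce, ?_⟩
    rw [Walk.edges_transfer]
    exact fun e he => c.edges_subset_edgeSet he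
  · rintro ⟨v, c, hc, he⟩ hA
    exact hA _ (hc.transfer he)

lemma measurableSet_isAcyclic [Countable V] :
    MeasurableSet {F : V × V → Bool | (graphOf F).IsAcyclic} := by
  have : {F : V × V → Bool | (graphOf F).IsAcyclic} =
      (⋃ (v : V), ⋃ (c : {c : (⊤ : SimpleGraph V).Walk v v // c.IsCycle}),
        {F : V × V → Bool | ∀ e ∈ (c : (⊤ : SimpleGraph V).Walk v v).edges,
          e ∈ (graphOf F).edgeSet})ᶜ := by
    ext F
    simp only [Set.mem_compl_iff, Set.mem_iUnion, Set.mem_setOf_eq]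
    constructor
    · intro hA h
      obtain ⟨v, c, he⟩ := h
      exact (not_isAcyclic_iff F).mpr ⟨v, c.1, c.2, he⟩ hA
    · intro h
      by_contra hA
      rw [not_isAcyclic_iff] at hA
      obtain ⟨v, c, hc, he⟩ := hA
      exact h ⟨v, ⟨c, hc⟩, he⟩
  rw [this]
  exact (MeasurableSet.iUnion fun v => MeasurableSet.iUnion fun c =>
    measurableSet_edgesEvent _).compl

lemma measurableSet_forest [Countable V] :
    MeasurableSet {F : V × V → Bool | IsDirForest F} := by
  have : {F : V × V → Bool | IsDirForest F} =
      (⋂ q : V × V, ({F : V × V → Bool | F q = true} ∩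
        {F : V × V → Bool | F (q.2, q.1) = true})ᶜ) ∩
      {F : V × V → Bool | (graphOf F).IsAcyclic} := by
    ext F
    simp [IsDirForest, Set.mem_iInter, not_and]
  rw [this]
  refine MeasurableSet.inter (MeasurableSet.iInter fun q => ?_) measurableSet_isAcyclic
  exact (MeasurableSet.inter
    ((measurable_pi_apply _) (measurableSet_singleton _))
    ((measurable_pi_apply _) (measurableSet_singleton _))).compl

lemma reachable_iff (F : V × V → Bool) (a b : V) :
    (graphOf F).Reachable a b ↔ ∃ c : (⊤ : SimpleGraph V).Walk a b,
      ∀ e ∈ c.edges, e ∈ (graphOf F).edgeSet := by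
  constructor
  · rintro ⟨w⟩
    have hce : ∀ e ∈ w.edges, e ∈ (⊤ : SimpleGraph V).edgeSet := by
      intro e he
      rw [SimpleGraph.edgeSet_top]
      exact SimpleGraph.not_isDiag_of_mem_edgeSet _ (w.edges_subset_edgeSet he)
    refine ⟨w.transfer ⊤ hce, ?_⟩
    rw [Walk.edges_transfer]
    exact fun e he => w.edges_subset_edgeSet he
  · rintro ⟨c, hc⟩
    exact ⟨c.transfer _ hc⟩

lemma measurableSet_reachable [Countable V] (a b : V) :
    MeasurableSet {F : V × V → Bool | (graphOf F).Reachable a b} := by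
  have : {F : V × V → Bool | (graphOf F).Reachable a b} =
      ⋃ c : (⊤ : SimpleGraph V).Walk a b,
        {F : V × V → Bool | ∀ e ∈ c.edges, e ∈ (graphOf F).edgeSet} := by
    ext F
    simp only [Set.mem_iUnion, Set.mem_setOf_eq]
    exact reachable_iff F a b
  rw [this]
  exact MeasurableSet.iUnion fun c => measurableSet_edgesEvent _

lemma measurableSet_badConn [Countable V] (H : Finset V) :
    MeasurableSet {F : V × V → Bool | IsDirForest F ∧
      ¬ ∀ a ∈ H, ∀ b ∈ H, (graphOf F).Reachable a b} := by
  have : {F : V × V → Bool | IsDirForest F ∧ ¬ ∀ a ∈ H, ∀ b ∈ H, (graphOf F).Reachable a b} =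
      {F : V × V → Bool | IsDirForest F} ∩
      (⋂ a ∈ H, ⋂ b ∈ H, {F : V × V → Bool | (graphOf F).Reachable a b})ᶜ := by
    ext F
    simp [Set.mem_iInter]
  rw [this]
  exact measurableSet_forest.inter
    ((MeasurableSet.biInter H.countable_toSet fun a _ =>
      MeasurableSet.biInter H.countable_toSet fun b _ => measurableSet_reachable a b).compl)

lemma measurable_dAct {Γ : Type*} [Group Γ] (γ : Γ) :
    Measurable (dAct (Γ := Γ) γ) :=
  measurable_pi_lambda _ fun p => measurable_pi_apply _

end Graphs

section Product

variable {ι : Type*} [Countable ι] {C : Type*}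
  [MeasurableSpace C] [TopologicalSpace C] [BorelSpace C]
  [CompactSpace C] [SecondCountableTopology C]
  [TopologicalSpace.PseudoMetrizableSpace C] [Nonempty C]
  (μ : Measure C) [IsProbabilityMeasure μ]

/-- restriction maps with the constant family made explicit -/
abbrev res (s : Finset ι) : (ι → C) → ((q : s) → C) :=
  Finset.restrict (π := fun _ => C) s

abbrev res₂ {s t : Finset ι} (h : s ⊆ t) : ((q : t) → C) → ((q : s) → C) :=
  Finset.restrict₂ (π := fun _ => C) h

/-- finite product measures -/
noncomputable def PP (s : Finset ι) : Measure ((q : s) → C) :=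
  Measure.pi (fun _ : s => μ)

instance (s : Finset ι) : IsProbabilityMeasure (PP μ s) := by
  unfold PP; infer_instance

/-- pushing a finite product through an injection composed with coordinatewise
measure preserving maps. -/
lemma measurePreserving_comp_pi {s t : Finset ι} (j : s → t) (hj : Function.Injective j)
    (g : (q : s) → C → C) (hg : ∀ q, MeasurePreserving (g q) μ μ) :
    MeasurePreserving (fun (y : (q : t) → C) (q : s) => g q (y (j q))) (PP μ t) (PP μ s) := by
  classical
  have hmeas : Measurable fun (y : (q : t) → C) (q : s) => g q (y (j q)) :=
    measurable_pi_lambda _ fun q => ((hg q).measurable).comp (measurable_pi_apply (j q))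
  refine ⟨hmeas, ?_⟩
  refine (Measure.pi_eq fun A hA => ?_).symm
  rw [Measure.map_apply hmeas (MeasurableSet.univ_pi hA)]
  have hpre : (fun (y : (q : t) → C) (q : s) => g q (y (j q))) ⁻¹' (univ.pi A) =
      univ.pi (fun q' : t => ⋂ (q : s) (_ : j q = q'), (g q) ⁻¹' (A q)) := by
    ext y
    simp only [mem_preimage, mem_pi, mem_univ, true_implies, mem_iInter]
    constructor
    · intro h q' q hq; subst hq; exact h q
    · intro h q; exact h (j q) q rfl
  rw [hpre]
  unfold PP
  rw [Measure.pi_pi]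
  have key : ∀ q : s, (⋂ (q'' : s) (_ : j q'' = j q), (g q'') ⁻¹' (A q'')) = (g q) ⁻¹' (A q) := by
    intro q; ext z
    simp only [mem_iInter, mem_preimage]
    constructor
    · intro h; exact h q rfl
    · intro h q'' hq''; cases hj hq''; exact h
  calc (∏ q' : t, μ (⋂ (q : s) (_ : j q = q'), (g q) ⁻¹' (A q)))
      = ∏ q' ∈ Finset.univ.map ⟨j, hj⟩,
          μ (⋂ (q : s) (_ : j q = q'), (g q) ⁻¹' (A q)) := by
        refine (Finset.prod_subset (Finset.subset_univ _) ?_).symm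
        intro x _ hx
        have hnx : ∀ q : s, ¬ j q = x := by
          intro q hq
          exact hx (Finset.mem_map.mpr ⟨q, Finset.mem_univ _, hq⟩)
        have : (⋂ (q : s) (_ : j q = x), (g q) ⁻¹' (A q)) = univ := by
          ext z
          simp only [mem_iInter, mem_univ, iff_true]
          intro q hq; exact absurd hq (hnx q)
        rw [this, measure_univ]
    _ = ∏ q : s, μ (⋂ (q'' : s) (_ : j q'' = j q), (g q'') ⁻¹' (A q'')) :=
        Finset.prod_map _ _ _
    _ = ∏ q : s, μ (A q) := by
        refine Finset.prod_congr rfl fun q _ => ?_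
        rw [key q, (hg q).measure_preimage (hA q).nullMeasurableSet]

lemma measurePreserving_restrict₂' {s t : Finset ι} (h : s ⊆ t) :
    MeasurePreserving (res₂ h) (PP μ t) (PP μ s) :=
  measurePreserving_comp_pi μ (fun q : s => (⟨q.1, h q.2⟩ : t))
    (fun a b hab => Subtype.ext (by simpa using congrArg Subtype.val hab))
    (fun _ => id) (fun _ => MeasurePreserving.id μ)

/-- The outer content used to build the infinite product measure. -/
noncomputable def piContent : Set (ι → C) → ℝ≥0∞ := fun E =>
  ⨅ (s : Finset ι) (B : Set ((q : s) → C))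
    (_ : MeasurableSet B ∧ E ⊆ res s ⁻¹' B), PP μ s B

lemma piContent_le_of_subset {E : Set (ι → C)} {s : Finset ι} {B : Set ((q : s) → C)}
    (hB : MeasurableSet B) (hE : E ⊆ res s ⁻¹' B) :
    piContent μ E ≤ PP μ s B := by
  refine iInf_le_of_le s (iInf_le_of_le B (iInf_le_of_le ⟨hB, hE⟩ le_rfl))

lemma piContent_mono {E E' : Set (ι → C)} (h : E ⊆ E') :
    piContent μ E ≤ piContent μ E' := by
  refine le_iInf fun s => le_iInf fun B => le_iInf fun hB => ?_
  exact piContent_le_of_subset μ hB.1 (h.trans hB.2)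

lemma piContent_empty : piContent (ι := ι) μ ∅ = 0 := by
  refine le_antisymm ?_ zero_le
  have := piContent_le_of_subset μ (E := (∅ : Set (ι → C))) (s := (∅ : Finset ι))
    (B := (∅ : Set ((q : (∅ : Finset ι)) → C))) MeasurableSet.empty (by simp)
  simpa using this

lemma piContent_univ_le : piContent (ι := ι) μ univ ≤ 1 := by
  have := piContent_le_of_subset μ (E := (univ : Set (ι → C))) (s := (∅ : Finset ι))
    (B := (univ : Set ((q : (∅ : Finset ι)) → C))) MeasurableSet.univ (by simp)
  simpa [measure_univ] using this

lemma piContent_splits (E : Set (ι → C)) (s : Finset ι) (B : Set ((q : s) → C))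
    (hB : MeasurableSet B) :
    piContent μ (E ∩ res s ⁻¹' B) + piContent μ (E \ res s ⁻¹' B) ≤ piContent μ E := by
  classical
  refine le_iInf fun t => le_iInf fun B' => le_iInf fun hh => ?_
  obtain ⟨hB', hE⟩ := hh
  have hsw : s ⊆ s ∪ t := Finset.subset_union_left
  have htw : t ⊆ s ∪ t := Finset.subset_union_right
  set B₁ : Set ((q : (s ∪ t : Finset ι)) → C) := res₂ hsw ⁻¹' B with hB₁def
  set B₂ : Set ((q : (s ∪ t : Finset ι)) → C) := res₂ htw ⁻¹' B' with hB₂def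
  have hB₁ : MeasurableSet B₁ := (Finset.measurable_restrict₂ hsw) hB
  have hB₂ : MeasurableSet B₂ := (Finset.measurable_restrict₂ htw) hB'
  have hcyl1 : res s ⁻¹' B = res (s ∪ t) ⁻¹' B₁ := rfl
  have hcyl2 : res t ⁻¹' B' = res (s ∪ t) ⁻¹' B₂ := rfl
  have hb1 : piContent μ (E ∩ res s ⁻¹' B) ≤ PP μ (s ∪ t) (B₂ ∩ B₁) := by
    refine piContent_le_of_subset μ (hB₂.inter hB₁) ?_
    intro x hx
    exact ⟨hE hx.1, hx.2⟩
  have hb2 : piContent μ (E \ res s ⁻¹' B) ≤ PP μ (s ∪ t) (B₂ \ B₁) := by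
    refine piContent_le_of_subset μ (hB₂.diff hB₁) ?_
    intro x hx
    exact ⟨hE hx.1, hx.2⟩
  calc piContent μ (E ∩ res s ⁻¹' B) + piContent μ (E \ res s ⁻¹' B)
      ≤ PP μ (s ∪ t) (B₂ ∩ B₁) + PP μ (s ∪ t) (B₂ \ B₁) := add_le_add hb1 hb2
    _ = PP μ (s ∪ t) B₂ := by
        rw [measure_inter_add_diff _ hB₁]
    _ = PP μ t B' := (measurePreserving_restrict₂' μ htw).measure_preimage
        hB'.nullMeasurableSet

/-- extraction of a near optimal cylinder -/
lemma exists_cyl_lt {E : Set (ι → C)} {c : ℝ≥0∞} (h : piContent μ E < c) :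
    ∃ (s : Finset ι) (B : Set ((q : s) → C)),
      MeasurableSet B ∧ E ⊆ res s ⁻¹' B ∧ PP μ s B < c := by
  simp only [piContent, iInf_lt_iff] at h
  obtain ⟨s, B, ⟨hB, hE⟩, hlt⟩ := h
  exact ⟨s, B, hB, hE, hlt⟩

/-- The key compactness estimate: countable covers of the whole space have total
content at least `1`. -/
lemma piContent_cover_univ (t : ℕ → Set (ι → C)) (ht : (univ : Set (ι → C)) ⊆ ⋃ n, t n) :
    1 ≤ ∑' n, piContent μ (t n) := by
  classical
  by_cases htop : ∃ n, piContent μ (t n) = ∞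
  · obtain ⟨n, hn⟩ := htop
    refine le_trans ?_ (ENNReal.le_tsum n)
    simp [hn]
  push_neg at htop
  refine ENNReal.le_of_forall_pos_le_add fun ε hε _ => ?_
  set δ : ℝ≥0∞ := (ε : ℝ≥0∞) / 2 with hδdef
  have hδ0 : δ ≠ 0 := by
    simp [hδdef, ENNReal.div_eq_zero_iff, hε.ne']
  -- choose near optimal cylinders
  have hchoose : ∀ n : ℕ, ∃ (s : Finset ι) (B : Set ((q : s) → C)),
      MeasurableSet B ∧ t n ⊆ res s ⁻¹' B ∧
        PP μ s B < piContent μ (t n) + δ * 2⁻¹ ^ (n + 1) := by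
    intro n
    refine exists_cyl_lt μ ?_
    refine ENNReal.lt_add_right (htop n) ?_
    simp [hδ0, ENNReal.pow_eq_top_iff]
  choose s B hBmeas hBsub hBlt using hchoose
  -- enlarge to open sets
  have hopen : ∀ n : ℕ, ∃ U : Set ((q : s n) → C), IsOpen U ∧ B n ⊆ U ∧
      PP μ (s n) U < PP μ (s n) (B n) + δ * 2⁻¹ ^ (n + 1) := by
    intro n
    obtain ⟨U, hBU, hUopen, hUlt⟩ := Set.exists_isOpen_lt_of_lt (B n)
      (PP μ (s n) (B n) + δ * 2⁻¹ ^ (n + 1))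
      (ENNReal.lt_add_right (measure_ne_top _ _) (by simp [hδ0, ENNReal.pow_eq_top_iff]))
    exact ⟨U, hUopen, hBU, hUlt⟩
  choose U hUopen hBU hUlt using hopen
  -- compactness
  have hcov : (univ : Set (ι → C)) ⊆ ⋃ n, res (s n) ⁻¹' (U n) := by
    intro x hx
    obtain ⟨_, ⟨n, rfl⟩, hxn⟩ := ht hx
    exact mem_iUnion.mpr ⟨n, hBU n (hBsub n hxn)⟩
  obtain ⟨fin, hfin⟩ := IsCompact.elim_finite_subcover isCompact_univ
    (fun n => res (s n) ⁻¹' (U n))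
    (fun n => (hUopen n).preimage (continuous_pi fun q => continuous_apply _)) hcov
  -- combine at a common finite level
  set S : Finset ι := fin.biUnion s with hSdef
  have hsub : ∀ n ∈ fin, s n ⊆ S := fun n hn => Finset.subset_biUnion_of_mem _ hn
  have huniv : (univ : Set ((q : S) → C)) ⊆
      ⋃ n ∈ fin, ⋃ (h : n ∈ fin), res₂ (hsub n h) ⁻¹' (U n) := by
    intro y _
    set x : ι → C := fun i => if h : i ∈ S then y ⟨i, h⟩ else Classical.arbitrary C with hxdef
    obtain ⟨_, ⟨n, rfl⟩, hn⟩ := hfin (mem_univ x)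
    simp only [mem_iUnion] at hn
    obtain ⟨hnfin, hxn⟩ := hn
    refine mem_iUnion.mpr ⟨n, mem_iUnion.mpr ⟨hnfin, mem_iUnion.mpr ⟨hnfin, ?_⟩⟩⟩
    have : res₂ (hsub n hnfin) y = res (s n) x := by
      funext q
      simp only [Finset.restrict₂, Finset.restrict, hxdef]
      rw [dif_pos (hsub n hnfin q.2)]
    simpa [Set.mem_preimage, this] using hxn
  have hkey : (1 : ℝ≥0∞) ≤ ∑ n ∈ fin, PP μ (s n) (U n) := by
    have h1 : (1 : ℝ≥0∞) = PP μ S univ := (measure_univ).symm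
    rw [h1]
    calc PP μ S univ ≤ PP μ S (⋃ n ∈ fin, ⋃ (h : n ∈ fin), res₂ (hsub n h) ⁻¹' (U n)) :=
          measure_mono huniv
      _ ≤ ∑ n ∈ fin, PP μ S (⋃ (h : n ∈ fin), res₂ (hsub n h) ⁻¹' (U n)) :=
          measure_biUnion_finset_le _ _
      _ = ∑ n ∈ fin, PP μ (s n) (U n) := by
          refine Finset.sum_congr rfl fun n hn => ?_
          have hcollapse : (⋃ (h : n ∈ fin), res₂ (hsub n h) ⁻¹' (U n)) =
              res₂ (hsub n hn) ⁻¹' (U n) := by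
            ext z
            simp only [Set.mem_iUnion]
            exact ⟨fun ⟨h, hz⟩ => hz, fun hz => ⟨hn, hz⟩⟩
          rw [hcollapse]
          exact (measurePreserving_restrict₂' μ (hsub n hn)).measure_preimage
            (hUopen n).measurableSet.nullMeasurableSet
  -- final sum manipulation
  have hterm : ∀ n, PP μ (s n) (U n) ≤ piContent μ (t n) + 2 * (δ * 2⁻¹ ^ (n + 1)) := by
    intro n
    calc PP μ (s n) (U n) ≤ PP μ (s n) (B n) + δ * 2⁻¹ ^ (n + 1) := (hUlt n).le
      _ ≤ (piContent μ (t n) + δ * 2⁻¹ ^ (n + 1)) + δ * 2⁻¹ ^ (n + 1) :=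
          add_le_add (hBlt n).le le_rfl
      _ = piContent μ (t n) + 2 * (δ * 2⁻¹ ^ (n + 1)) := by ring
  have hgeo : ∑' n : ℕ, (δ * 2⁻¹ ^ (n + 1)) = δ := by
    have h2 : ∑' n : ℕ, ((2 : ℝ≥0∞)⁻¹) ^ (n + 1) = 1 := by
      have := ENNReal.tsum_geometric (2 : ℝ≥0∞)⁻¹
      rw [ENNReal.one_sub_inv_two, inv_inv] at this
      calc ∑' n : ℕ, ((2 : ℝ≥0∞)⁻¹) ^ (n + 1)
          = ∑' n : ℕ, ((2 : ℝ≥0∞)⁻¹) ^ n * 2⁻¹ := by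
            refine tsum_congr fun n => ?_
            rw [pow_succ]
        _ = (∑' n : ℕ, ((2 : ℝ≥0∞)⁻¹) ^ n) * 2⁻¹ := ENNReal.tsum_mul_right
        _ = 2 * 2⁻¹ := by rw [this]
        _ = 1 := ENNReal.mul_inv_cancel two_ne_zero ENNReal.ofNat_ne_top
    calc ∑' n : ℕ, (δ * 2⁻¹ ^ (n + 1)) = δ * ∑' n : ℕ, ((2 : ℝ≥0∞)⁻¹) ^ (n + 1) :=
        ENNReal.tsum_mul_left
      _ = δ := by rw [h2, mul_one]
  calc (1 : ℝ≥0∞) ≤ ∑ n ∈ fin, PP μ (s n) (U n) := hkey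
    _ ≤ ∑ n ∈ fin, (piContent μ (t n) + 2 * (δ * 2⁻¹ ^ (n + 1))) :=
        Finset.sum_le_sum fun n _ => hterm n
    _ ≤ ∑' n, (piContent μ (t n) + 2 * (δ * 2⁻¹ ^ (n + 1))) := ENNReal.sum_le_tsum _
    _ = (∑' n, piContent μ (t n)) + 2 * δ := by
        rw [ENNReal.tsum_add]
        congr 1
        calc ∑' n, 2 * (δ * 2⁻¹ ^ (n + 1)) = 2 * ∑' n, (δ * 2⁻¹ ^ (n + 1)) :=
            ENNReal.tsum_mul_left
          _ = 2 * δ := by rw [hgeo]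
    _ = (∑' n, piContent μ (t n)) + ε := by
        congr 1
        rw [hδdef]
        rw [ENNReal.mul_div_cancel two_ne_zero ENNReal.ofNat_ne_top]

/-- The outer measure. -/
noncomputable def outerPi : OuterMeasure (ι → C) :=
  OuterMeasure.ofFunction (piContent μ) (piContent_empty μ)

lemma outerPi_caratheodory_cyl (s : Finset ι) (B : Set ((q : s) → C)) (hB : MeasurableSet B) :
    MeasurableSet[(outerPi μ).caratheodory] (res s ⁻¹' B) :=
  OuterMeasure.ofFunction_caratheodory fun t => piContent_splits μ t s B hB

lemma le_outerPi_caratheodory :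
    (MeasurableSpace.pi : MeasurableSpace (ι → C)) ≤ (outerPi μ).caratheodory := by
  refine iSup_le fun q => ?_
  intro E hE
  obtain ⟨A, hA, rfl⟩ := hE
  have hcyl : (fun x : ι → C => x q) ⁻¹' A =
      res ({q} : Finset ι) ⁻¹' ((fun y : (r : ({q} : Finset ι)) → C =>
        y ⟨q, Finset.mem_singleton_self q⟩) ⁻¹' A) := rfl
  rw [hcyl]
  exact outerPi_caratheodory_cyl μ _ _ ((measurable_pi_apply _) hA)

/-- The infinite product measure. -/
noncomputable def nuPi : Measure (ι → C) :=
  (outerPi μ).toMeasure (le_outerPi_caratheodory μ)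

lemma nuPi_apply_eq_outer {E : Set (ι → C)} (hE : MeasurableSet E) :
    nuPi μ E = outerPi μ E :=
  toMeasure_apply _ _ hE

lemma outerPi_le_piContent (E : Set (ι → C)) : outerPi μ E ≤ piContent μ E :=
  OuterMeasure.ofFunction_le _

lemma nuPi_cyl_le {s : Finset ι} {B : Set ((q : s) → C)} (hB : MeasurableSet B) :
    nuPi μ (res s ⁻¹' B) ≤ PP μ s B := by
  rw [nuPi_apply_eq_outer μ ((Finset.measurable_restrict s) hB)]
  exact (outerPi_le_piContent μ _).trans (piContent_le_of_subset μ hB subset_rfl)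

lemma nuPi_univ : nuPi μ (univ : Set (ι → C)) = 1 := by
  rw [nuPi_apply_eq_outer μ MeasurableSet.univ]
  refine le_antisymm ((outerPi_le_piContent μ _).trans (piContent_univ_le μ)) ?_
  rw [outerPi, OuterMeasure.ofFunction_apply]
  exact le_iInf fun t => le_iInf fun ht => piContent_cover_univ μ t ht

instance : IsProbabilityMeasure (nuPi (ι := ι) μ) := ⟨nuPi_univ μ⟩

/-- single coordinate bound -/
lemma nuPi_eval_le (q : ι) {A : Set C} (hA : MeasurableSet A) :
    nuPi μ {x : ι → C | x q ∈ A} ≤ μ A := by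
  classical
  set B : Set ((r : ({q} : Finset ι)) → C) :=
    (fun y : (r : ({q} : Finset ι)) → C => y ⟨q, Finset.mem_singleton_self q⟩) ⁻¹' A with hBdef
  have hBmeas : MeasurableSet B := (measurable_pi_apply _) hA
  have h1 : {x : ι → C | x q ∈ A} = res ({q} : Finset ι) ⁻¹' B := rfl
  rw [h1]
  refine (nuPi_cyl_le μ hBmeas).trans ?_
  have hBpi : B = univ.pi (fun _ : ({q} : Finset ι) => A) := by
    ext y
    simp only [hBdef, Set.mem_preimage, Set.mem_pi, mem_univ, true_implies]
    constructor
    · intro h r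
      have : r = ⟨q, Finset.mem_singleton_self q⟩ := Subtype.ext (Finset.mem_singleton.mp r.2)
      rw [this]; exact h
    · intro h; exact h _
  rw [hBpi]
  unfold PP
  rw [Measure.pi_pi]
  rw [Finset.prod_const]
  have hcard : Fintype.card (({q} : Finset ι) : Type _) = 1 := by
    simp [Fintype.card_coe]
  rw [Finset.card_univ, hcard, pow_one]

/-- Invariance of the content under twisted permutation maps -/
lemma piContent_comp_le (e : ι ≃ ι) (g : ι → C → C) (hg : ∀ q, MeasurePreserving (g q) μ μ)
    (E : Set (ι → C)) :
    piContent μ ((fun (x : ι → C) (q : ι) => g q (x (e q))) ⁻¹' E) ≤ piContent μ E := by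
  classical
  refine le_iInf fun s => le_iInf fun B => le_iInf fun hh => ?_
  obtain ⟨hB, hE⟩ := hh
  set t : Finset ι := s.map e.toEmbedding with htdef
  have hjmem : ∀ q : s, e q.1 ∈ t := fun q => by
    rw [htdef]; exact Finset.mem_map_of_mem _ q.2
  set j : (q : s) → t := fun q => ⟨e q.1, hjmem q⟩ with hjdef
  have hjinj : Function.Injective j := by
    intro a b hab
    have := congrArg Subtype.val hab
    simp only [hjdef] at this
    exact Subtype.ext (e.injective this)
  have hmp := measurePreserving_comp_pi μ j hjinj (fun q => g q.1) (fun q => hg q.1)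
  set θ : ((q : t) → C) → ((q : s) → C) := fun y q => g q.1 (y (j q)) with hθdef
  have hpre : (fun (x : ι → C) (q : ι) => g q (x (e q))) ⁻¹' (res s ⁻¹' B) =
      res t ⁻¹' (θ ⁻¹' B) := rfl
  have hθB : MeasurableSet (θ ⁻¹' B) := hmp.measurable hB
  refine le_trans (piContent_le_of_subset μ hθB ?_) ?_
  · rw [← hpre]
    exact fun x hx => Set.preimage_mono hE hx
  · rw [hmp.measure_preimage hB.nullMeasurableSet]

lemma outerPi_comp_le (e : ι ≃ ι) (g : ι → C → C) (hg : ∀ q, MeasurePreserving (g q) μ μ)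
    (E : Set (ι → C)) :
    outerPi μ ((fun (x : ι → C) (q : ι) => g q (x (e q))) ⁻¹' E) ≤ outerPi μ E := by
  rw [outerPi, OuterMeasure.ofFunction_apply, OuterMeasure.ofFunction_apply]
  refine le_iInf fun t => le_iInf fun ht => ?_
  set Ψ := fun (x : ι → C) (q : ι) => g q (x (e q)) with hΨdef
  have hcov : Ψ ⁻¹' E ⊆ ⋃ n, Ψ ⁻¹' (t n) := by
    intro x hx
    obtain ⟨_, ⟨n, rfl⟩, hxn⟩ := ht hx
    exact mem_iUnion.mpr ⟨n, hxn⟩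
  calc (⨅ (u : ℕ → Set (ι → C)) (_ : Ψ ⁻¹' E ⊆ ⋃ n, u n), ∑' n, piContent μ (u n))
      ≤ ∑' n, piContent μ (Ψ ⁻¹' (t n)) := by
        exact iInf_le_of_le (fun n => Ψ ⁻¹' (t n)) (iInf_le_of_le hcov le_rfl)
    _ ≤ ∑' n, piContent μ (t n) :=
        ENNReal.tsum_le_tsum fun n => piContent_comp_le μ e g hg (t n)

lemma nuPi_measurePreserving (e : ι ≃ ι) (g ginv : ι → C → C)
    (hg : ∀ q, MeasurePreserving (g q) μ μ) (hginv : ∀ q, MeasurePreserving (ginv q) μ μ)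
    (hgg : ∀ q c, g q (ginv (e q) c) = c) :
    MeasurePreserving (fun (x : ι → C) (q : ι) => g q (x (e q))) (nuPi μ) (nuPi μ) := by
  set Ψ := fun (x : ι → C) (q : ι) => g q (x (e q)) with hΨdef
  set Ψ' := fun (x : ι → C) (q : ι) => ginv q (x (e.symm q)) with hΨ'def
  have hΨmeas : Measurable Ψ :=
    measurable_pi_lambda _ fun q => ((hg q).measurable).comp (measurable_pi_apply _)
  have hid : ∀ x, Ψ (Ψ' x) = x := by
    intro x
    funext q
    simp only [hΨdef, hΨ'def, Equiv.symm_apply_apply]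
    exact hgg q (x q)
  refine ⟨hΨmeas, ?_⟩
  ext E hE
  rw [Measure.map_apply hΨmeas hE]
  rw [nuPi_apply_eq_outer μ (hΨmeas hE), nuPi_apply_eq_outer μ hE]
  refine le_antisymm (outerPi_comp_le μ e g hg E) ?_
  have hEeq : E = Ψ' ⁻¹' (Ψ ⁻¹' E) := by
    ext x
    simp only [Set.mem_preimage, hid x]
  calc outerPi μ E = outerPi μ (Ψ' ⁻¹' (Ψ ⁻¹' E)) := by rw [← hEeq]
    _ ≤ outerPi μ (Ψ ⁻¹' E) := outerPi_comp_le μ e.symm ginv hginv (Ψ ⁻¹' E)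

end Product

section Main

variable {Γ : Type*} [Group Γ] (Λ : Subgroup Γ)

/-- the "within coset" coordinate of a group element -/
noncomputable def pr (a : Γ) : Λ :=
  ⟨(Quotient.out ((a : Γ ⧸ Λ)))⁻¹ * a, by
    rw [← QuotientGroup.eq, QuotientGroup.out_eq']⟩

lemma pr_spec (a : Γ) : Quotient.out ((a : Γ ⧸ Λ)) * (pr Λ a : Γ) = a := by
  simp [pr]

lemma pr_inj {a b : Γ} (h : (a : Γ ⧸ Λ) = (b : Γ ⧸ Λ)) (h' : pr Λ a = pr Λ b) : a = b := by
  have := pr_spec Λ a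
  rw [h, h'] at this
  rw [← this, pr_spec Λ b]

lemma mk_inv_mul (γ a : Γ) : ((γ⁻¹ * a : Γ) : Γ ⧸ Λ) = γ⁻¹ • (a : Γ ⧸ Λ) := by
  rw [MulAction.Quotient.smul_mk, smul_eq_mul]

/-- the coset-dependent cocycle -/
noncomputable def cc (γ : Γ) (q : Γ ⧸ Λ) : Λ :=
  ⟨(Quotient.out (γ⁻¹ • q))⁻¹ * γ⁻¹ * Quotient.out q, by
    rw [mul_assoc, ← QuotientGroup.eq, QuotientGroup.out_eq', mk_inv_mul,
      QuotientGroup.out_eq']⟩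

lemma pr_shift (γ a : Γ) : pr Λ (γ⁻¹ * a) = cc Λ γ ((a : Γ ⧸ Λ)) * pr Λ a := by
  apply Subtype.ext
  show (Quotient.out (((γ⁻¹ * a : Γ) : Γ ⧸ Λ)))⁻¹ * (γ⁻¹ * a) = _
  rw [mk_inv_mul]
  show _ = ((Quotient.out (γ⁻¹ • (a : Γ ⧸ Λ)))⁻¹ * γ⁻¹ * Quotient.out ((a : Γ ⧸ Λ))) *
    ((Quotient.out ((a : Γ ⧸ Λ)))⁻¹ * a)
  group

open Classical in
/-- spreading a forest on `Λ` over all the cosets -/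
noncomputable def Phi (x : (Γ ⧸ Λ) → ((Λ × Λ) → Bool)) : Γ × Γ → Bool :=
  fun p => if h : ((p.1 : Γ ⧸ Λ)) = (p.2 : Γ ⧸ Λ)
    then x ((p.1 : Γ ⧸ Λ)) (pr Λ p.1, pr Λ p.2) else false

lemma measurable_Phi : Measurable (Phi Λ) := by
  refine measurable_pi_lambda _ fun p => ?_
  by_cases h : ((p.1 : Γ ⧸ Λ)) = (p.2 : Γ ⧸ Λ)
  · have : (fun x : (Γ ⧸ Λ) → ((Λ × Λ) → Bool) => Phi Λ x p) =
        fun x => x ((p.1 : Γ ⧸ Λ)) (pr Λ p.1, pr Λ p.2) := by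
      funext x; simp only [Phi, dif_pos h]
    rw [this]
    exact (measurable_pi_apply _).comp (measurable_pi_apply _)
  · have : (fun x : (Γ ⧸ Λ) → ((Λ × Λ) → Bool) => Phi Λ x p) = fun _ => false := by
      funext x; simp only [Phi, dif_neg h]
    rw [this]
    exact measurable_const

lemma phi_true {x : (Γ ⧸ Λ) → ((Λ × Λ) → Bool)} {a b : Γ} (h : Phi Λ x (a, b) = true) :
    ((a : Γ ⧸ Λ)) = (b : Γ ⧸ Λ) ∧ x ((a : Γ ⧸ Λ)) (pr Λ a, pr Λ b) = true := by
  by_cases hq : ((a : Γ ⧸ Λ)) = (b : Γ ⧸ Λ)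
  · refine ⟨hq, ?_⟩
    simpa only [Phi, dif_pos hq] using h
  · exact absurd (by simpa only [Phi, dif_neg hq] using h) Bool.false_ne_true

lemma phi_adj {x : (Γ ⧸ Λ) → ((Λ × Λ) → Bool)} {a b : Γ}
    (h : (graphOf (Phi Λ x)).Adj a b) :
    ((a : Γ ⧸ Λ)) = (b : Γ ⧸ Λ) ∧ (graphOf (x ((a : Γ ⧸ Λ)))).Adj (pr Λ a) (pr Λ b) := by
  obtain ⟨hab, hor⟩ := h
  have hpr : pr Λ a ≠ pr Λ b → True := fun _ => trivial
  cases hor with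
  | inl h1 =>
    obtain ⟨hq, hx⟩ := phi_true Λ h1
    exact ⟨hq, fun hpr => hab (pr_inj Λ hq hpr), Or.inl hx⟩
  | inr h1 =>
    obtain ⟨hq, hx⟩ := phi_true Λ h1
    refine ⟨hq.symm, fun hpr => hab (pr_inj Λ hq.symm hpr), Or.inr ?_⟩
    rw [← hq]
    exact hx

open SimpleGraph in
lemma walk_down {x : (Γ ⧸ Λ) → ((Λ × Λ) → Bool)} :
    ∀ {a b : Γ} (w : (graphOf (Phi Λ x)).Walk a b),
      ((a : Γ ⧸ Λ)) = (b : Γ ⧸ Λ) ∧ (∀ v ∈ w.support, ((v : Γ ⧸ Λ)) = (a : Γ ⧸ Λ)) ∧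
      ∃ w' : (graphOf (x ((a : Γ ⧸ Λ)))).Walk (pr Λ a) (pr Λ b),
        w'.support = w.support.map (pr Λ) ∧
        w'.edges = w.edges.map (Sym2.map (pr Λ)) := by
  intro a b w
  induction w with
  | nil =>
    exact ⟨rfl, by simp, Walk.nil, by simp, by simp⟩
  | @cons u v c h w ih =>
    obtain ⟨hq, hadj⟩ := phi_adj Λ h
    obtain ⟨hq', hsupp, w', hs, he⟩ := ih
    refine ⟨hq.trans hq', ?_, ?_⟩
    · intro z hz
      rw [Walk.support_cons] at hz
      rcases List.mem_cons.mp hz with rfl | hz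
      · rfl
      · exact (hsupp z hz).trans hq.symm
    · rw [hq] at hadj ⊢
      refine ⟨Walk.cons hadj w', ?_, ?_⟩
      · rw [Walk.support_cons, Walk.support_cons, List.map_cons, hs]
      · rw [Walk.edges_cons, Walk.edges_cons, List.map_cons, he]
        rfl

open SimpleGraph in
lemma phi_forest {x : (Γ ⧸ Λ) → ((Λ × Λ) → Bool)} (hx : ∀ q, IsDirForest (x q)) :
    IsDirForest (Phi Λ x) := by
  constructor
  · rintro p ⟨h1, h2⟩
    obtain ⟨hq1, hx1⟩ := phi_true Λ h1
    obtain ⟨hq2, hx2⟩ := phi_true Λ h2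
    rw [hq2] at hx2
    exact (hx ((p.1 : Γ ⧸ Λ))).1 (pr Λ p.1, pr Λ p.2) ⟨hx1, hx2⟩
  · intro v c hc
    obtain ⟨-, hsupp, c', hs, he⟩ := walk_down Λ c
    have hinj : ∀ u ∈ c.support, ∀ z ∈ c.support, pr Λ u = pr Λ z → u = z := by
      intro u hu z hz hprz
      exact pr_inj Λ ((hsupp u hu).trans (hsupp z hz).symm) hprz
    have hedge_inj : ∀ e₁ ∈ c.edges, ∀ e₂ ∈ c.edges,
        Sym2.map (pr Λ) e₁ = Sym2.map (pr Λ) e₂ → e₁ = e₂ := by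
      intro e₁ he₁ e₂ he₂ hmap
      induction e₁ with
      | h u₁ v₁ =>
      induction e₂ with
      | h u₂ v₂ =>
      simp only [Sym2.map_pair_eq, Sym2.eq_iff] at hmap ⊢
      have hu₁ := Walk.fst_mem_support_of_mem_edges c he₁
      have hv₁ := Walk.snd_mem_support_of_mem_edges c he₁
      have hu₂ := Walk.fst_mem_support_of_mem_edges c he₂
      have hv₂ := Walk.snd_mem_support_of_mem_edges c he₂
      rcases hmap with ⟨h1, h2⟩ | ⟨h1, h2⟩
      · exact Or.inl ⟨hinj _ hu₁ _ hu₂ h1, hinj _ hv₁ _ hv₂ h2⟩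
      · exact Or.inr ⟨hinj _ hu₁ _ hv₂ h1, hinj _ hv₁ _ hu₂ h2⟩
    have hcyc' : c'.IsCycle := by
      refine ⟨⟨⟨?_⟩, ?_⟩, ?_⟩
      · rw [he]
        exact List.Nodup.map_on hedge_inj hc.edges_nodup
      · intro hnil
        have h3 := hc.three_le_length
        have : c'.length = c.length := by
          have h1 := congrArg List.length he
          simpa [Walk.length_edges] using h1
        rw [hnil] at this
        simp only [Walk.length_nil] at this
        omega
      · have htm : (c.support.map (pr Λ)).tail = c.support.tail.map (pr Λ) := by
          cases hsup : c.support <;> simp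
        rw [hs, htm]
        refine List.Nodup.map_on ?_ hc.support_nodup
        intro u hu z hz
        exact hinj u (List.mem_of_mem_tail hu) z (List.mem_of_mem_tail hz)
    exact (hx ((v : Γ ⧸ Λ))).2 c' hcyc'

lemma mk_out_mul (q : Γ ⧸ Λ) (v : Λ) : ((Quotient.out q * (v : Γ) : Γ) : Γ ⧸ Λ) = q := by
  rw [QuotientGroup.mk_mul_of_mem _ v.2, QuotientGroup.out_eq']

lemma pr_out_mul (q : Γ ⧸ Λ) (v : Λ) : pr Λ (Quotient.out q * (v : Γ)) = v := by
  apply Subtype.ext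
  show (Quotient.out (((Quotient.out q * (v : Γ) : Γ) : Γ ⧸ Λ)))⁻¹ *
    (Quotient.out q * (v : Γ)) = (v : Γ)
  rw [mk_out_mul]
  group

lemma phi_out_mul (x : (Γ ⧸ Λ) → ((Λ × Λ) → Bool)) (q : Γ ⧸ Λ) (v w : Λ) :
    Phi Λ x (Quotient.out q * (v : Γ), Quotient.out q * (w : Γ)) = x q (v, w) := by
  have hv := mk_out_mul Λ q v
  have hw := mk_out_mul Λ q w
  have hcond : (((Quotient.out q * (v : Γ) : Γ)) : Γ ⧸ Λ) =
      ((Quotient.out q * (w : Γ) : Γ) : Γ ⧸ Λ) := by rw [hv, hw]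
  simp only [Phi, dif_pos hcond]
  rw [pr_out_mul, pr_out_mul, hv]

open SimpleGraph in
noncomputable def homUp (x : (Γ ⧸ Λ) → ((Λ × Λ) → Bool)) (q : Γ ⧸ Λ) :
    (graphOf (x q)) →g (graphOf (Phi Λ x)) where
  toFun v := Quotient.out q * (v : Γ)
  map_rel' := by
    intro v w hvw
    obtain ⟨hne, hor⟩ := hvw
    refine ⟨?_, ?_⟩
    · intro hcontra
      exact hne (Subtype.ext (mul_left_cancel hcontra))
    · rw [phi_out_mul, phi_out_mul]
      exact hor

/-- the identity coset -/
noncomputable def q₁ : Γ ⧸ Λ := ((1 : Γ) : Γ ⧸ Λ)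

lemma mk_eq_q₁ {a : Γ} (ha : a ∈ Λ) : ((a : Γ ⧸ Λ)) = q₁ Λ := by
  rw [q₁, eq_comm, QuotientGroup.eq]
  simpa using ha

/-- the key equivariance identity -/
lemma dAct_phi (γ : Γ) (x : (Γ ⧸ Λ) → ((Λ × Λ) → Bool)) :
    dAct γ (Phi Λ x) = Phi Λ (fun q => dAct ((cc Λ γ q)⁻¹ : Λ) (x (γ⁻¹ • q))) := by
  funext p
  obtain ⟨p₁, p₂⟩ := p
  show Phi Λ x (γ⁻¹ * p₁, γ⁻¹ * p₂) = _
  by_cases hc : ((p₁ : Γ ⧸ Λ)) = (p₂ : Γ ⧸ Λ)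
  · have hc' : (((γ⁻¹ * p₁ : Γ) : Γ ⧸ Λ)) = ((γ⁻¹ * p₂ : Γ) : Γ ⧸ Λ) := by
      rw [mk_inv_mul, mk_inv_mul, hc]
    simp only [Phi, dif_pos hc, dif_pos hc']
    show x (((γ⁻¹ * p₁ : Γ) : Γ ⧸ Λ)) (pr Λ (γ⁻¹ * p₁), pr Λ (γ⁻¹ * p₂)) =
      dAct ((cc Λ γ ((p₁ : Γ ⧸ Λ)))⁻¹ : Λ) (x (γ⁻¹ • ((p₁ : Γ ⧸ Λ)))) (pr Λ p₁, pr Λ p₂)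
    have hrhs : dAct ((cc Λ γ ((p₁ : Γ ⧸ Λ)))⁻¹ : Λ) (x (γ⁻¹ • ((p₁ : Γ ⧸ Λ)))) (pr Λ p₁, pr Λ p₂) =
        x (γ⁻¹ • ((p₁ : Γ ⧸ Λ))) (cc Λ γ ((p₁ : Γ ⧸ Λ)) * pr Λ p₁,
          cc Λ γ ((p₁ : Γ ⧸ Λ)) * pr Λ p₂) := by
      simp [dAct]
    rw [hrhs]
    rw [show cc Λ γ ((p₁ : Γ ⧸ Λ)) * pr Λ p₂ = pr Λ (γ⁻¹ * p₂) from by rw [hc, ← pr_shift]]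
    rw [← pr_shift, mk_inv_mul]
  · have hc' : ¬ ((((γ⁻¹ * p₁ : Γ) : Γ ⧸ Λ)) = ((γ⁻¹ * p₂ : Γ) : Γ ⧸ Λ)) := by
      rw [mk_inv_mul, mk_inv_mul]
      intro hcon
      exact hc (smul_left_cancel γ⁻¹ hcon)
    simp only [Phi, dif_neg hc, dif_neg hc']

end Main


/-- If a countable group `Γ` is the union of an increasing sequence of
approximately treeable subgroups, then `Γ` is approximately treeable. -/
theorem stmt8 (Γ : Type*) [Group Γ] [Countable Γ]
    (Γseq : ℕ → Subgroup Γ)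
    (hmono : ∀ n, Γseq n ≤ Γseq (n + 1))
    (hunion : ∀ g : Γ, ∃ n, g ∈ Γseq n)
    (htree : ∀ n, ApproxTreeable (Γseq n)) :
    ApproxTreeable Γ := by
  classical
  intro H ε hε
  have hmono' : Monotone Γseq := monotone_nat_of_le_succ hmono
  obtain ⟨N, hN⟩ : ∃ N, ∀ a ∈ H, a ∈ Γseq N := by
    choose f hf using fun a : {x // x ∈ H} => hunion a.1
    refine ⟨H.attach.sup f, fun a ha => ?_⟩
    exact hmono' (Finset.le_sup (H.mem_attach ⟨a, ha⟩)) (hf ⟨a, ha⟩)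
  set Λ : Subgroup Γ := Γseq N with hΛdef
  haveI : Countable (Γ ⧸ Λ) :=
    Function.Surjective.countable (f := (QuotientGroup.mk : Γ → Γ ⧸ Λ))
      (fun q => ⟨Quotient.out q, QuotientGroup.out_eq' q⟩)
  set H' : Finset Λ := H.attach.image (fun a => pr Λ a.1) with hH'def
  obtain ⟨μ, hμprob, hμinv, hμforest, hμbad⟩ := htree N H' ε hε
  haveI := hμprob
  set ν := nuPi (ι := Γ ⧸ Λ) μ with hνdef
  haveI hνprob : IsProbabilityMeasure ν := by rw [hνdef]; infer_instance
  have hΦmeas := measurable_Phi Λ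
  set μ' := ν.map (Phi Λ) with hμ'def
  haveI hμ'prob : IsProbabilityMeasure μ' := by
    rw [hμ'def]; exact Measure.isProbabilityMeasure_map hΦmeas.aemeasurable
  -- the good set
  set Good : Set ((Γ ⧸ Λ) → ((Λ × Λ) → Bool)) := {x | ∀ q, IsDirForest (x q)} with hGoodDef
  have hGoodMeas : MeasurableSet Good := by
    have hG2 : Good = ⋂ q, (fun x : (Γ ⧸ Λ) → ((Λ × Λ) → Bool) => x q) ⁻¹'
        {F | IsDirForest F} := by
      ext x; simp [hGoodDef]
    rw [hG2]
    exact MeasurableSet.iInter fun q => (measurable_pi_apply q) measurableSet_forest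
  have hGoodCompl : ν Goodᶜ = 0 := by
    have hsub : Goodᶜ ⊆ ⋃ q, {x : (Γ ⧸ Λ) → ((Λ × Λ) → Bool) |
        x q ∈ {F | IsDirForest F}ᶜ} := by
      intro x hx
      simp only [hGoodDef, mem_compl_iff, mem_setOf_eq, not_forall] at hx
      obtain ⟨q, hq⟩ := hx
      exact mem_iUnion.mpr ⟨q, hq⟩
    have hzero : ∀ q : Γ ⧸ Λ, ν {x : (Γ ⧸ Λ) → ((Λ × Λ) → Bool) |
        x q ∈ {F | IsDirForest F}ᶜ} = 0 := by
      intro q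
      refine le_antisymm (le_trans (nuPi_eval_le μ q measurableSet_forest.compl) ?_) zero_le
      rw [measure_compl measurableSet_forest (measure_ne_top _ _), hμforest, measure_univ]
      simp
    refine le_antisymm (le_trans (measure_mono hsub) (le_trans (measure_iUnion_le _) ?_))
      zero_le
    have htsum : ∑' q : Γ ⧸ Λ, ν {x : (Γ ⧸ Λ) → ((Λ × Λ) → Bool) |
        x q ∈ {F | IsDirForest F}ᶜ} = 0 := by
      simp only [hzero, tsum_zero]
    exact le_of_eq htsum
  have hGoodOne : ν Good = 1 := by
    have h2 := measure_add_measure_compl (μ := ν) hGoodMeas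
    rw [hGoodCompl, add_zero, measure_univ] at h2
    exact h2
  refine ⟨μ', hμ'prob, ?_, ?_, ?_⟩
  · -- invariance
    intro γ
    set e : (Γ ⧸ Λ) ≃ (Γ ⧸ Λ) :=
      ⟨fun q => γ⁻¹ • q, fun q => γ • q, fun q => smul_inv_smul γ q,
        fun q => inv_smul_smul γ q⟩ with hedef
    set g : (Γ ⧸ Λ) → ((Λ × Λ) → Bool) → ((Λ × Λ) → Bool) :=
      fun q => dAct ((cc Λ γ q)⁻¹ : Λ) with hgdef
    set ginv : (Γ ⧸ Λ) → ((Λ × Λ) → Bool) → ((Λ × Λ) → Bool) :=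
      fun q => dAct (cc Λ γ (γ • q)) with hginvdef
    have hg : ∀ q, MeasurePreserving (g q) μ μ := fun q => hμinv _
    have hginv : ∀ q, MeasurePreserving (ginv q) μ μ := fun q => hμinv _
    have hgg : ∀ (q : Γ ⧸ Λ) (F : (Λ × Λ) → Bool), g q (ginv (e q) F) = F := by
      intro q F
      show dAct ((cc Λ γ q)⁻¹ : Λ) (dAct (cc Λ γ (γ • (γ⁻¹ • q))) F) = F
      rw [smul_inv_smul, dAct_dAct, inv_mul_cancel, dAct_one]
    have hΨ := nuPi_measurePreserving μ e g ginv hg hginv hgg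
    have hcomm : dAct γ ∘ Phi Λ =
        Phi Λ ∘ (fun (x : (Γ ⧸ Λ) → ((Λ × Λ) → Bool)) (q : Γ ⧸ Λ) => g q (x (e q))) := by
      funext x
      exact dAct_phi Λ γ x
    refine ⟨measurable_dAct γ, ?_⟩
    rw [hμ'def, Measure.map_map (measurable_dAct γ) hΦmeas, hcomm,
      ← Measure.map_map hΦmeas hΨ.measurable, hΨ.map_eq]
  · -- forests have full measure
    refine le_antisymm prob_le_one ?_
    rw [hμ'def, Measure.map_apply hΦmeas measurableSet_forest]
    refine le_trans (le_of_eq hGoodOne.symm) (measure_mono ?_)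
    intro x hx
    exact phi_forest Λ hx
  · -- the bad event is small
    rw [hμ'def, Measure.map_apply hΦmeas (measurableSet_badConn H)]
    have hsub : Phi Λ ⁻¹' {F | IsDirForest F ∧
          ¬ ∀ a ∈ H, ∀ b ∈ H, (graphOf F).Reachable a b} ⊆
        Goodᶜ ∪ {x : (Γ ⧸ Λ) → ((Λ × Λ) → Bool) | x (q₁ Λ) ∈
          {F | IsDirForest F ∧ ¬ ∀ a' ∈ H', ∀ b' ∈ H', (graphOf F).Reachable a' b'}} := by
      intro x hx
      by_cases hgood : x ∈ Good
      · right
        obtain ⟨hfor, hnotconn⟩ := hx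
        refine ⟨hgood (q₁ Λ), fun hall => hnotconn ?_⟩
        intro a ha b hb
        have haΛ : a ∈ Λ := hN a ha
        have hbΛ : b ∈ Λ := hN b hb
        have hpa : pr Λ a ∈ H' := Finset.mem_image.mpr ⟨⟨a, ha⟩, H.mem_attach _, rfl⟩
        have hpb : pr Λ b ∈ H' := Finset.mem_image.mpr ⟨⟨b, hb⟩, H.mem_attach _, rfl⟩
        have hreach := hall _ hpa _ hpb
        have hup := SimpleGraph.Reachable.map (homUp Λ x (q₁ Λ)) hreach
        have hea : Quotient.out (q₁ Λ) * ((pr Λ a : Λ) : Γ) = a := by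
          rw [← mk_eq_q₁ Λ haΛ]; exact pr_spec Λ a
        have heb : Quotient.out (q₁ Λ) * ((pr Λ b : Λ) : Γ) = b := by
          rw [← mk_eq_q₁ Λ hbΛ]; exact pr_spec Λ b
        have hend : (homUp Λ x (q₁ Λ)) (pr Λ a) = a := hea
        have hend' : (homUp Λ x (q₁ Λ)) (pr Λ b) = b := heb
        rw [hend, hend'] at hup
        exact hup
      · left; exact hgood
    calc ν (Phi Λ ⁻¹' {F | IsDirForest F ∧
            ¬ ∀ a ∈ H, ∀ b ∈ H, (graphOf F).Reachable a b})
        ≤ ν (Goodᶜ ∪ {x : (Γ ⧸ Λ) → ((Λ × Λ) → Bool) | x (q₁ Λ) ∈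
            {F | IsDirForest F ∧ ¬ ∀ a' ∈ H', ∀ b' ∈ H', (graphOf F).Reachable a' b'}}) :=
          measure_mono hsub
      _ ≤ ν Goodᶜ + ν {x : (Γ ⧸ Λ) → ((Λ × Λ) → Bool) | x (q₁ Λ) ∈
            {F | IsDirForest F ∧ ¬ ∀ a' ∈ H', ∀ b' ∈ H', (graphOf F).Reachable a' b'}} :=
          measure_union_le _ _
      _ ≤ 0 + μ {F | IsDirForest F ∧ ¬ ∀ a' ∈ H', ∀ b' ∈ H', (graphOf F).Reachable a' b'} := by
          rw [hGoodCompl]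
          exact add_le_add le_rfl (nuPi_eval_le μ _ (measurableSet_badConn H'))
      _ < ENNReal.ofReal ε := by rw [zero_add]; exact hμbad

end Stmt8
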